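/- For every integer m ≥ 1 and all real numbers x₁, …, x_m in [0, π/2], one has ∑_{k=1}^m Λ(x_k) ≤ m · Λ((x₁ + ⋯ + x_m)/m). -/

import Mathlib

open Real MeasureTheory intervalIntegral Set

/-- `log` is integrable on `Ioc 0 b`. -/
lemma integrableOn_log_Ioc {b : ℝ} (hb : 0 < b) :
    IntegrableOn Real.log (Set.Ioc 0 b) := by
  -- g x = x * log b - (x * log x - x) has derivative log b - log x ≥ 0 on (0, b)
  have key : IntegrableOn (fun x => Real.log b - Real.log x) (Set.Ioc 0 b) := by
    apply integrableOn_deriv_of_nonneg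
      (g := fun x => x * Real.log b - (x * Real.log x - x))
    · exact ((continuous_id.mul continuous_const).sub
        (Real.continuous_mul_log.sub continuous_id)).continuousOn
    · intro x hx
      have hx0 : x ≠ 0 := ne_of_gt hx.1
      exact ((hasDerivAt_id x).mul_const (Real.log b)).sub
        ((Real.hasDerivAt_mul_log hx0).sub (hasDerivAt_id x)) |>.congr_deriv (by ring)
    · intro x hx
      have := Real.log_le_log hx.1 hx.2.le
      linarith
  have : IntegrableOn (fun x => Real.log b - (Real.log b - Real.log x)) (Set.Ioc 0 b) :=
    (integrableOn_const measure_Ioc_lt_top.ne).sub key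
  simpa using this

/-- The integrand of the Lobachevsky function is integrable on `Ioc 0 b` for `b ≤ π/2`. -/
lemma integrableOn_log_two_sin {b : ℝ} (hb : 0 < b) (hb' : b ≤ Real.pi / 2) :
    IntegrableOn (fun t => Real.log |2 * Real.sin t|) (Set.Ioc 0 b) := by
  set f : ℝ → ℝ := fun t => Real.log |2 * Real.sin t| with hf
  have hmeas : Measurable f :=
    Real.measurable_log.comp ((continuous_const.mul Real.continuous_sin).abs.measurable)
  -- bound: for t ∈ Ioc 0 b, t ≤ 2 sin t ≤ 2 t, so log t ≤ f t ≤ log t + log 2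
  have hbound : ∀ t ∈ Set.Ioc 0 b, |f t - Real.log t| ≤ Real.log 2 := by
    intro t ht
    have ht0 : 0 < t := ht.1
    have htpi : t ≤ Real.pi / 2 := ht.2.trans hb'
    have hsin_pos : 0 < Real.sin t :=
      Real.sin_pos_of_pos_of_lt_pi ht0 (lt_of_le_of_lt htpi (by linarith [Real.pi_pos]))
    have habs : |2 * Real.sin t| = 2 * Real.sin t := abs_of_pos (by linarith)
    have h1 : t ≤ 2 * Real.sin t := by
      have h := Real.mul_le_sin ht0.le htpi
      have hpi4 : Real.pi ≤ 4 := Real.pi_le_four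
      have hpip : 0 < Real.pi := Real.pi_pos
      have : t ≤ 2 * (2 / Real.pi * t) := by
        rw [show 2 * (2 / Real.pi * t) = 4 * t / Real.pi by ring, le_div_iff₀ hpip]
        nlinarith
      linarith
    have h2 : 2 * Real.sin t ≤ 2 * t := by
      have := Real.sin_le ht0.le; linarith
    have hfl : Real.log t ≤ f t := by
      rw [hf]; simp only [habs]
      exact Real.log_le_log ht0 h1
    have hfu : f t ≤ Real.log t + Real.log 2 := by
      rw [hf]; simp only [habs]
      calc Real.log (2 * Real.sin t) ≤ Real.log (2 * t) :=
            Real.log_le_log (by linarith) h2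
        _ = Real.log 2 + Real.log t := Real.log_mul (by norm_num) ht0.ne'
        _ = Real.log t + Real.log 2 := by ring
    rw [abs_le]
    constructor
    · have h2pos : (0:ℝ) ≤ Real.log 2 := Real.log_nonneg (by norm_num)
      linarith
    · linarith
  have hdiff : IntegrableOn (fun t => f t - Real.log t) (Set.Ioc 0 b) := by
    apply Measure.integrableOn_of_bounded (M := Real.log 2) measure_Ioc_lt_top.ne
    · exact (hmeas.sub Real.measurable_log).aestronglyMeasurable
    · filter_upwards [ae_restrict_mem measurableSet_Ioc] with t ht
      simpa [Real.norm_eq_abs] using hbound t ht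
  have : IntegrableOn (fun t => Real.log t + (f t - Real.log t)) (Set.Ioc 0 b) :=
    (integrableOn_log_Ioc hb).add hdiff
  simpa using this

/-- The Lobachevsky function `Λ(x) = -∫₀ˣ log |2 sin t| dt`. -/
noncomputable def lobachevsky (x : ℝ) : ℝ :=
  -∫ t in (0:ℝ)..x, Real.log |2 * Real.sin t|

lemma intervalIntegrable_log_two_sin {x : ℝ} (hx : x ∈ Set.Icc 0 (Real.pi / 2)) :
    IntervalIntegrable (fun t => Real.log |2 * Real.sin t|) volume 0 x := by
  rcases eq_or_lt_of_le hx.1 with h | h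
  · simp [← h]
  · rw [intervalIntegrable_iff, uIoc_of_le hx.1]
    exact integrableOn_log_two_sin h hx.2

lemma lobachevsky_concaveOn : ConcaveOn ℝ (Set.Icc 0 (Real.pi / 2)) lobachevsky := by
  have hpi : (0:ℝ) < Real.pi / 2 := by positivity
  have hint : IntegrableOn (fun t => Real.log |2 * Real.sin t|)
      (Set.uIcc (0:ℝ) (Real.pi / 2)) := by
    rw [Set.uIcc_of_le hpi.le, integrableOn_Icc_iff_integrableOn_Ioc]
    exact integrableOn_log_two_sin hpi le_rfl
  have hcont : ContinuousOn lobachevsky (Set.Icc 0 (Real.pi / 2)) := by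
    have := (intervalIntegral.continuousOn_primitive_interval
      (f := fun t => Real.log |2 * Real.sin t|) (a := (0:ℝ)) (b := Real.pi / 2)
      (μ := volume) hint).neg
    rwa [Set.uIcc_of_le hpi.le] at this
  have hderivAt : ∀ y ∈ Set.Ioo (0:ℝ) (Real.pi / 2),
      HasDerivAt lobachevsky (-Real.log |2 * Real.sin y|) y := by
    intro y hy
    have hsin_pos : 0 < Real.sin y :=
      Real.sin_pos_of_pos_of_lt_pi hy.1 (hy.2.trans (by linarith [Real.pi_pos]))
    have hcy : ContinuousAt (fun t => Real.log |2 * Real.sin t|) y := by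
      apply Real.continuousAt_log ?_ |>.comp
        ((continuous_const.mul Real.continuous_sin).abs.continuousAt)
      simp only [abs_ne_zero]
      exact mul_ne_zero two_ne_zero hsin_pos.ne'
    have hmeas : StronglyMeasurableAtFilter (fun t => Real.log |2 * Real.sin t|)
        (nhds y) volume :=
      (Real.measurable_log.comp
        ((continuous_const.mul Real.continuous_sin).abs.measurable)).stronglyMeasurable
        |>.stronglyMeasurableAtFilter
    exact (intervalIntegral.integral_hasDerivAt_right
      (intervalIntegrable_log_two_sin ⟨hy.1.le, hy.2.le⟩) hmeas hcy).neg
  have hintD : interior (Set.Icc (0:ℝ) (Real.pi / 2)) = Set.Ioo 0 (Real.pi / 2) :=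
    interior_Icc
  apply AntitoneOn.concaveOn_of_deriv (convex_Icc _ _) hcont
  · rw [hintD]
    intro y hy
    exact (hderivAt y hy).differentiableAt.differentiableWithinAt
  · rw [hintD]
    intro a ha b hb hab
    rw [(hderivAt a ha).deriv, (hderivAt b hb).deriv]
    have hsa : 0 < Real.sin a :=
      Real.sin_pos_of_pos_of_lt_pi ha.1 (ha.2.trans (by linarith [Real.pi_pos]))
    have hsb : 0 < Real.sin b :=
      Real.sin_pos_of_pos_of_lt_pi hb.1 (hb.2.trans (by linarith [Real.pi_pos]))
    have hsab : Real.sin a ≤ Real.sin b :=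
      Real.strictMonoOn_sin.monotoneOn ⟨by linarith [ha.1], ha.2.le.trans le_rfl⟩
        ⟨by linarith [hb.1], hb.2.le⟩ hab
    rw [abs_of_pos (by linarith : (0:ℝ) < 2 * Real.sin a),
        abs_of_pos (by linarith : (0:ℝ) < 2 * Real.sin b)]
    exact neg_le_neg (Real.log_le_log (by linarith) (by linarith))

/-- For every integer `m ≥ 1` and reals `x₁, …, x_m ∈ [0, π/2]`,
`∑ Λ(x_k) ≤ m · Λ((x₁ + ⋯ + x_m)/m)`. -/
theorem lobachevsky_jensen (m : ℕ) (hm : 1 ≤ m) (x : Fin m → ℝ)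
    (hx : ∀ k, x k ∈ Set.Icc 0 (Real.pi / 2)) :
    ∑ k, lobachevsky (x k) ≤ (m : ℝ) * lobachevsky ((∑ k, x k) / m) := by
  have hm0 : (0:ℝ) < m := by exact_mod_cast hm
  have hjensen := lobachevsky_concaveOn.le_map_sum (t := Finset.univ)
    (w := fun _ : Fin m => (m : ℝ)⁻¹) (p := x)
    (fun i _ => by positivity)
    (by simp [Finset.sum_const, Finset.card_univ, mul_inv_cancel₀ hm0.ne'])
    (fun i _ => hx i)
  simp only [smul_eq_mul] at hjensen
  have h1 : ∑ i : Fin m, (m:ℝ)⁻¹ * x i = (∑ k, x k) / m := by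
    rw [← Finset.mul_sum]; ring
  have h2 : ∑ i : Fin m, (m:ℝ)⁻¹ * lobachevsky (x i)
      = (m:ℝ)⁻¹ * ∑ k, lobachevsky (x k) := by
    rw [← Finset.mul_sum]
  rw [h1, h2] at hjensen
  calc ∑ k, lobachevsky (x k) = (m:ℝ) * ((m:ℝ)⁻¹ * ∑ k, lobachevsky (x k)) := by
        field_simp
    _ ≤ (m:ℝ) * lobachevsky ((∑ k, x k) / m) := by
        exact mul_le_mul_of_nonneg_left hjensen hm0.le
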